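/- For every integer n > 2, the total graph of the path P_n on n vertices has primitive hole number h(T(P_n)) = 2n − 3. -/

import Mathlib

/-- The primitive hole number of a simple graph: the number of triangles
(3-cliques) in the graph. -/
noncomputable def SimpleGraph.holeNumber {V : Type*} (G : SimpleGraph V) : ℕ :=
  {s : Finset V | G.IsNClique 3 s}.ncard

/-- The primitive degree of a vertex: the number of triangles (3-cliques)
of the graph containing that vertex. -/
noncomputable def SimpleGraph.primDegree {V : Type*} (G : SimpleGraph V) (v : V) : ℕ :=
  {s : Finset V | G.IsNClique 3 s ∧ v ∈ s}.ncard

/-- The total graph of a simple graph `G`: vertices are the vertices and edges of `G`,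
two of them adjacent iff the corresponding elements of `G` are adjacent or incident. -/
def SimpleGraph.totalGraph {V : Type*} (G : SimpleGraph V) :
    SimpleGraph (V ⊕ G.edgeSet) where
  Adj x y :=
    match x, y with
    | Sum.inl u, Sum.inl v => G.Adj u v
    | Sum.inl u, Sum.inr e => u ∈ (e : Sym2 V)
    | Sum.inr e, Sum.inl u => u ∈ (e : Sym2 V)
    | Sum.inr e, Sum.inr f => e ≠ f ∧ ∃ v, v ∈ (e : Sym2 V) ∧ v ∈ (f : Sym2 V)
  symm := by
    constructor
    rintro (u | e) (v | f) h
    · exact G.adj_symm h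
    · exact h
    · exact h
    · exact ⟨h.1.symm, h.2.imp fun v hv => ⟨hv.2, hv.1⟩⟩
  loopless := by
    constructor
    rintro (u | e) h
    · exact G.ne_of_adj h rfl
    · exact h.1 rfl

open SimpleGraph
section Aux

lemma tg_adj_ll {V : Type*} (G : SimpleGraph V) (u v : V) :
    G.totalGraph.Adj (Sum.inl u) (Sum.inl v) ↔ G.Adj u v := Iff.rfl

lemma tg_adj_lr {V : Type*} (G : SimpleGraph V) (u : V) (e : G.edgeSet) :
    G.totalGraph.Adj (Sum.inl u) (Sum.inr e) ↔ u ∈ (e : Sym2 V) := Iff.rfl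

lemma tg_adj_rr {V : Type*} (G : SimpleGraph V) (e f : G.edgeSet) :
    G.totalGraph.Adj (Sum.inr e) (Sum.inr f) ↔
      e ≠ f ∧ ∃ v, v ∈ (e : Sym2 V) ∧ v ∈ (f : Sym2 V) := Iff.rfl

/-- the `i`-th edge of the path graph -/
def pedge (n i : ℕ) (h : i + 1 < n) : (pathGraph n).edgeSet :=
  ⟨s(⟨i, by omega⟩, ⟨i + 1, h⟩), by
    rw [SimpleGraph.mem_edgeSet, pathGraph_adj]; left; rfl⟩

lemma mem_pedge {n i : ℕ} (h : i + 1 < n) (v : Fin n) :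
    v ∈ (pedge n i h : Sym2 (Fin n)) ↔ v.val = i ∨ v.val = i + 1 := by
  simp [pedge, Sym2.mem_iff, Fin.ext_iff]

lemma pedge_inj {n i j : ℕ} {h : i + 1 < n} {h' : j + 1 < n}
    (he : pedge n i h = pedge n j h') : i = j := by
  have h1 := (mem_pedge h ⟨i, by omega⟩).mpr (Or.inl rfl)
  rw [he, mem_pedge] at h1
  have h2 := (mem_pedge h ⟨i + 1, h⟩).mpr (Or.inr rfl)
  rw [he, mem_pedge] at h2
  simp only [Fin.val_mk] at h1 h2
  omega

lemma edge_form {n : ℕ} (e : (pathGraph n).edgeSet) :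
    ∃ (i : ℕ) (h : i + 1 < n), e = pedge n i h := by
  obtain ⟨e, he⟩ := e
  induction e using Sym2.ind with
  | _ u v =>
    rw [SimpleGraph.mem_edgeSet, pathGraph_adj] at he
    rcases he with he | he
    · have hlt : u.val + 1 < n := by have := v.isLt; omega
      refine ⟨u.val, hlt, ?_⟩
      apply Subtype.ext
      show s(u, v) = _
      have hv : v = ⟨u.val + 1, hlt⟩ := Fin.ext he.symm
      subst hv; rfl
    · have hlt : v.val + 1 < n := by have := u.isLt; omega
      refine ⟨v.val, hlt, ?_⟩
      apply Subtype.ext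
      show s(u, v) = _
      have hu : u = ⟨v.val + 1, hlt⟩ := Fin.ext he.symm
      subst hu
      rw [Sym2.eq_swap]; rfl

/-- enumeration of the triangles of the total graph of the path graph -/
def F (n : ℕ) : Fin (n - 1) ⊕ Fin (n - 2) → Finset (Fin n ⊕ (pathGraph n).edgeSet)
  | .inl i => {Sum.inl ⟨i, by have := i.isLt; omega⟩, Sum.inl ⟨i + 1, by have := i.isLt; omega⟩,
      Sum.inr (pedge n i (by have := i.isLt; omega))}
  | .inr j => {Sum.inl ⟨j + 1, by have := j.isLt; omega⟩,
      Sum.inr (pedge n j (by have := j.isLt; omega)),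
      Sum.inr (pedge n (j + 1) (by have := j.isLt; omega))}

end Aux

lemma pedge_eq_iff {n i j : ℕ} (h : i + 1 < n) (h' : j + 1 < n) :
    pedge n i h = pedge n j h' ↔ i = j :=
  ⟨pedge_inj, by rintro rfl; rfl⟩

lemma F_triangle (n : ℕ) (x : Fin (n - 1) ⊕ Fin (n - 2)) :
    (pathGraph n).totalGraph.IsNClique 3 (F n x) := by
  cases x with
  | inl i =>
    have hi := i.isLt
    refine SimpleGraph.is3Clique_triple_iff.mpr ⟨?_, ?_, ?_⟩
    · show (pathGraph n).Adj _ _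
      rw [pathGraph_adj]; left; rfl
    · show (⟨i, by omega⟩ : Fin n) ∈ (pedge n i (by omega) : Sym2 (Fin n))
      rw [mem_pedge]; left; rfl
    · show (⟨i + 1, by omega⟩ : Fin n) ∈ (pedge n i (by omega) : Sym2 (Fin n))
      rw [mem_pedge]; right; rfl
  | inr j =>
    have hj := j.isLt
    refine SimpleGraph.is3Clique_triple_iff.mpr ⟨?_, ?_, ?_⟩
    · show (⟨j + 1, by omega⟩ : Fin n) ∈ (pedge n j (by omega) : Sym2 (Fin n))
      rw [mem_pedge]; right; rfl
    · show (⟨j + 1, by omega⟩ : Fin n) ∈ (pedge n (j + 1) (by omega) : Sym2 (Fin n))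
      rw [mem_pedge]; left; rfl
    · refine ⟨fun h => by have := pedge_inj h; omega, ⟨j + 1, by omega⟩, ?_, ?_⟩
      · rw [mem_pedge]; right; rfl
      · rw [mem_pedge]; left; rfl

lemma tri_llr {n : ℕ} {u v : Fin n} {e : (pathGraph n).edgeSet}
    (huv : (pathGraph n).Adj u v) (hue : u ∈ (e : Sym2 (Fin n)))
    (hve : v ∈ (e : Sym2 (Fin n))) :
    ∃ x, F n x = ({Sum.inl u, Sum.inl v, Sum.inr e} :
      Finset (Fin n ⊕ (pathGraph n).edgeSet)) := by
  obtain ⟨i, h, rfl⟩ := edge_form e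
  rw [mem_pedge] at hue hve
  rw [pathGraph_adj] at huv
  have hb : i < n := by omega
  refine ⟨Sum.inl ⟨i, by omega⟩, ?_⟩
  simp only [F]
  have hc : (u.val = i ∧ v.val = i + 1) ∨ (u.val = i + 1 ∧ v.val = i) := by omega
  rcases hc with ⟨h1, h2⟩ | ⟨h1, h2⟩
  · have hu : u = ⟨i, hb⟩ := Fin.ext h1
    have hv : v = ⟨i + 1, h⟩ := Fin.ext h2
    subst hu; subst hv; rfl
  · have hu : u = ⟨i + 1, h⟩ := Fin.ext h1
    have hv : v = ⟨i, hb⟩ := Fin.ext h2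
    subst hu; subst hv
    rw [Finset.insert_comm]

lemma tri_lrr {n : ℕ} {v : Fin n} {e f : (pathGraph n).edgeSet}
    (hve : v ∈ (e : Sym2 (Fin n))) (hvf : v ∈ (f : Sym2 (Fin n))) (hef : e ≠ f) :
    ∃ x, F n x = ({Sum.inl v, Sum.inr e, Sum.inr f} :
      Finset (Fin n ⊕ (pathGraph n).edgeSet)) := by
  obtain ⟨i, hi, rfl⟩ := edge_form e
  obtain ⟨j, hj, rfl⟩ := edge_form f
  rw [mem_pedge] at hve hvf
  have hij : i ≠ j := fun h => hef (by subst h; rfl)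
  have hcase : (v.val = i + 1 ∧ j = i + 1) ∨ (v.val = j + 1 ∧ i = j + 1) := by omega
  rcases hcase with ⟨h1, h2⟩ | ⟨h1, h2⟩
  · subst h2
    have hb : i + 1 < n := by omega
    refine ⟨Sum.inr ⟨i, by omega⟩, ?_⟩
    simp only [F]
    have hv : v = ⟨i + 1, hb⟩ := Fin.ext h1
    subst hv; rfl
  · subst h2
    have hb : j + 1 < n := by omega
    refine ⟨Sum.inr ⟨j, by omega⟩, ?_⟩
    simp only [F]
    have hv : v = ⟨j + 1, hb⟩ := Fin.ext h1
    subst hv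
    have : (pedge n (j + 1) hi) = (pedge n (j + 1) (by omega : j + 1 + 1 < n)) := rfl
    ext y
    simp only [Finset.mem_insert, Finset.mem_singleton]
    constructor
    · rintro (h | h | h)
      · exact Or.inl h
      · exact Or.inr (Or.inr h)
      · exact Or.inr (Or.inl h)
    · rintro (h | h | h)
      · exact Or.inl h
      · exact Or.inr (Or.inr h)
      · exact Or.inr (Or.inl h)

lemma F_inj (n : ℕ) : Function.Injective (F n) := by
  rintro (i | i) (j | j) h
  · have hm : (Sum.inr (pedge n i (by have := i.isLt; omega)) :
        Fin n ⊕ (pathGraph n).edgeSet) ∈ F n (Sum.inl j) := by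
      rw [← h]; simp [F]
    simp only [F, Finset.mem_insert, Finset.mem_singleton, Sum.inr.injEq,
      reduceCtorEq, false_or] at hm
    have := pedge_inj hm
    exact congrArg Sum.inl (Fin.ext this)
  · exfalso
    have h1 : (Sum.inl (⟨i, by have := i.isLt; omega⟩ : Fin n) :
        Fin n ⊕ (pathGraph n).edgeSet) ∈ F n (Sum.inr j) := by
      rw [← h]; simp [F]
    have h2 : (Sum.inl (⟨i + 1, by have := i.isLt; omega⟩ : Fin n) :
        Fin n ⊕ (pathGraph n).edgeSet) ∈ F n (Sum.inr j) := by
      rw [← h]; simp [F]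
    simp only [F, Finset.mem_insert, Finset.mem_singleton, Sum.inl.injEq,
      reduceCtorEq, or_false, Fin.mk.injEq] at h1 h2
    omega
  · exfalso
    have h1 : (Sum.inl (⟨j, by have := j.isLt; omega⟩ : Fin n) :
        Fin n ⊕ (pathGraph n).edgeSet) ∈ F n (Sum.inr i) := by
      rw [h]; simp [F]
    have h2 : (Sum.inl (⟨j + 1, by have := j.isLt; omega⟩ : Fin n) :
        Fin n ⊕ (pathGraph n).edgeSet) ∈ F n (Sum.inr i) := by
      rw [h]; simp [F]
    simp only [F, Finset.mem_insert, Finset.mem_singleton, Sum.inl.injEq,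
      reduceCtorEq, or_false, Fin.mk.injEq] at h1 h2
    omega
  · have hm : (Sum.inl (⟨i + 1, by have := i.isLt; omega⟩ : Fin n) :
        Fin n ⊕ (pathGraph n).edgeSet) ∈ F n (Sum.inr j) := by
      rw [← h]; simp [F]
    simp only [F, Finset.mem_insert, Finset.mem_singleton, Sum.inl.injEq,
      reduceCtorEq, or_false, Fin.mk.injEq] at hm
    have := i.isLt
    exact congrArg Sum.inr (Fin.ext (by omega))

/-- For `n > 2`, the total graph of the path `P_n` satisfies `h(T(P_n)) = 2n - 3`. -/
theorem holeNumber_totalGraph_pathGraph (n : ℕ) (hn : 2 < n) :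
    (SimpleGraph.pathGraph n).totalGraph.holeNumber = 2 * n - 3 := by
  have hset : {s : Finset (Fin n ⊕ (pathGraph n).edgeSet) |
      (pathGraph n).totalGraph.IsNClique 3 s} = Set.range (F n) := by
    ext s
    simp only [Set.mem_setOf_eq, Set.mem_range]
    constructor
    · intro hs
      obtain ⟨a, b, c, hab, hac, hbc, rfl⟩ := SimpleGraph.is3Clique_iff.mp hs
      rcases a with u | e <;> rcases b with v | f <;> rcases c with w | g
      · exfalso
        rw [tg_adj_ll, pathGraph_adj] at hab hac hbc
        omega
      · exact tri_llr hab hac hbc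
      · obtain ⟨x, hx⟩ := tri_llr hac hab hbc
        exact ⟨x, by rw [hx]; ext y; simp only [Finset.mem_insert, Finset.mem_singleton]; tauto⟩
      · exact tri_lrr hab hac ((tg_adj_rr _ _ _).mp hbc).1
      · obtain ⟨x, hx⟩ := tri_llr hbc hab hac
        exact ⟨x, by rw [hx]; ext y; simp only [Finset.mem_insert, Finset.mem_singleton]; tauto⟩
      · obtain ⟨x, hx⟩ := tri_lrr hab hbc ((tg_adj_rr _ _ _).mp hac).1
        exact ⟨x, by rw [hx]; ext y; simp only [Finset.mem_insert, Finset.mem_singleton]; tauto⟩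
      · obtain ⟨x, hx⟩ := tri_lrr hac hbc ((tg_adj_rr _ _ _).mp hab).1
        exact ⟨x, by rw [hx]; ext y; simp only [Finset.mem_insert, Finset.mem_singleton]; tauto⟩
      · exfalso
        obtain ⟨i, hi, rfl⟩ := edge_form e
        obtain ⟨j, hj, rfl⟩ := edge_form f
        obtain ⟨k, hk, rfl⟩ := edge_form g
        obtain ⟨hef, x, hx1, hx2⟩ := hab
        obtain ⟨heg, y, hy1, hy2⟩ := hac
        obtain ⟨hfg, z, hz1, hz2⟩ := hbc
        rw [mem_pedge] at hx1 hx2 hy1 hy2 hz1 hz2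
        have hij : i ≠ j := fun h => hef (by subst h; rfl)
        have hik : i ≠ k := fun h => heg (by subst h; rfl)
        have hjk : j ≠ k := fun h => hfg (by subst h; rfl)
        omega
    · rintro ⟨x, rfl⟩
      exact F_triangle n x
  rw [SimpleGraph.holeNumber, hset, ← Set.image_univ,
    Set.ncard_image_of_injective _ (F_inj n), Set.ncard_univ, Nat.card_sum]
  simp only [Nat.card_eq_fintype_card, Fintype.card_fin]
  omega
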